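/- If X is a geodesic metric space and there exists D > 0 such that every geodesic segment in X is D-contracting, then every geodesic bigon in X is 10D-thin: for any two geodesics γ and κ with the same endpoints x, y, each of γ and κ is contained in the 10D-neighborhood of the other (indeed diam(γ ∪ κ) < 2D if d(x,y) < D, and otherwise each is within Hausdorff distance 10D of the other). -/
import Mathlib


open Metric Set

variable {X : Type*} [MetricSpace X]

/-- Nearest-point projection of the point `x` to the set `A`. -/
noncomputable def proj (A : Set X) (x : X) : Set X :=
  {a | a ∈ A ∧ dist x a = infDist x A}

/-- Nearest-point projection of the set `B` to the set `A`. -/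
noncomputable def projSet (A B : Set X) : Set X := ⋃ x ∈ B, proj A x

/-- Distance between two subsets of a metric space. -/
noncomputable def setDist (A B : Set X) : ℝ := sInf (Set.image2 dist A B)

/-- `γ` is a geodesic segment from `x` to `y` (image of a unit-speed parameterization). -/
def IsGeodesicSeg (γ : Set X) (x y : X) : Prop :=
  ∃ (f : ℝ → X) (L : ℝ), 0 ≤ L ∧
    (∀ s ∈ Icc 0 L, ∀ t ∈ Icc 0 L, dist (f s) (f t) = |s - t|) ∧
    f 0 = x ∧ f L = y ∧ γ = f '' Icc 0 L

/-- `γ` is a geodesic segment. -/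
def IsGeodesic (γ : Set X) : Prop := ∃ x y, IsGeodesicSeg γ x y

/-- `γ` is `D`-contracting: any geodesic at distance `> D` from `γ`
projects onto `γ` with diameter `< D`. -/
def IsContractingSet (D : ℝ) (γ : Set X) : Prop :=
  ∀ κ : Set X, IsGeodesic κ → D < setDist γ κ → diam (projSet γ κ) < D

/-- `X` is a geodesic metric space. -/
def GeodesicSpace (X : Type*) [MetricSpace X] : Prop :=
  ∀ x y : X, ∃ γ : Set X, IsGeodesicSeg γ x y

lemma geod_mem_left {γ : Set X} {x y : X} (h : IsGeodesicSeg γ x y) : x ∈ γ := by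
  obtain ⟨f, L, hL, _, h0, _, rfl⟩ := h
  exact ⟨0, ⟨le_refl 0, hL⟩, h0⟩

lemma geod_mem_right {γ : Set X} {x y : X} (h : IsGeodesicSeg γ x y) : y ∈ γ := by
  obtain ⟨f, L, hL, _, _, hLy, rfl⟩ := h
  exact ⟨L, ⟨hL, le_refl L⟩, hLy⟩

lemma geod_compact {γ : Set X} {x y : X} (h : IsGeodesicSeg γ x y) : IsCompact γ := by
  obtain ⟨f, L, hL, hiso, _, _, rfl⟩ := h
  refine isCompact_Icc.image_of_continuousOn ?_
  refine (LipschitzOnWith.of_dist_le_mul (K := 1) ?_).continuousOn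
  intro s hs t ht
  rw [hiso s hs t ht, Real.dist_eq, NNReal.coe_one, one_mul]

lemma geod_dist_bound {γ : Set X} {x y : X} (h : IsGeodesicSeg γ x y) :
    ∀ z ∈ γ, dist z x ≤ dist x y := by
  obtain ⟨f, L, hL, hiso, h0, hLy, rfl⟩ := h
  rintro z ⟨s, hs, rfl⟩
  have h0m : (0:ℝ) ∈ Icc 0 L := ⟨le_refl 0, hL⟩
  have hLm : L ∈ Icc 0 L := ⟨hL, le_refl L⟩
  have h1 : dist (f s) x = s := by
    rw [← h0, hiso s hs 0 h0m]
    rw [abs_of_nonneg (by linarith [hs.1])]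
    ring
  have h2 : dist x y = L := by
    rw [← h0, ← hLy, hiso 0 h0m L hLm]
    rw [abs_of_nonpos (by linarith)]
    ring
  rw [h1, h2]; exact hs.2

/-- Key lemma: every point on one side of a bigon is within `7D` of the other side. -/
lemma key {X : Type*} [MetricSpace X] [ProperSpace X]
    (D : ℝ) (hD : 0 < D)
    (hall : ∀ γ : Set X, IsGeodesic γ → IsContractingSet D γ)
    (x y : X) (γ κ : Set X)
    (hγ : IsGeodesicSeg γ x y) (hκ : IsGeodesicSeg κ x y) :
    ∀ z ∈ κ, infDist z γ ≤ 7 * D := by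
  have hxγ : x ∈ γ := geod_mem_left hγ
  have hyγ : y ∈ γ := geod_mem_right hγ
  have hγne : γ.Nonempty := ⟨x, hxγ⟩
  have hγcomp : IsCompact γ := geod_compact hγ
  obtain ⟨f, L, hL, hiso, hf0, hfL, hκeq⟩ := hκ
  rintro z hz
  rw [hκeq] at hz
  obtain ⟨t, ht, rfl⟩ := hz
  -- clamp function
  set c : ℝ → ℝ := fun s => max 0 (min s L) with hc
  have hc_mem : ∀ s, c s ∈ Icc 0 L := by
    intro s
    constructor
    · exact le_max_left _ _
    · exact max_le hL (min_le_right s L)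
  have hc_id : ∀ s ∈ Icc 0 L, c s = s := by
    intro s hs
    simp only [hc, min_eq_left hs.2, max_eq_right hs.1]
  have hclip : LipschitzWith 1 c := (LipschitzWith.id.min_const L).const_max 0
  have hfc : LipschitzWith 1 (fun s => f (c s)) := by
    refine LipschitzWith.of_dist_le_mul fun s u => ?_
    rw [hiso (c s) (hc_mem s) (c u) (hc_mem u), NNReal.coe_one, one_mul, ← Real.dist_eq]
    simpa using hclip.dist_le_mul s u
  set g : ℝ → ℝ := fun s => infDist (f (c s)) γ with hg
  have hg_cont : Continuous g := (continuous_infDist_pt γ).comp hfc.continuous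
  have hgt_eq : g t = infDist (f t) γ := by rw [hg]; simp only [hc_id t ht]
  rcases le_or_gt (g t) (2 * D) with hgt | hgt
  · rw [← hgt_eq]; linarith
  -- the set A left of t, and B right of t
  have hg0 : g 0 = 0 := by
    have : c 0 = 0 := hc_id 0 ⟨le_refl 0, hL⟩
    rw [hg]; simp only [this, hf0]; exact infDist_zero_of_mem hxγ
  have hgL : g L = 0 := by
    have : c L = L := hc_id L ⟨hL, le_refl L⟩
    rw [hg]; simp only [this, hfL]; exact infDist_zero_of_mem hyγ
  set A : Set ℝ := {s | s ≤ t ∧ g s ≤ 2 * D} with hA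
  have hA0 : (0:ℝ) ∈ A := ⟨ht.1, by rw [hg0]; positivity⟩
  have hAne : A.Nonempty := ⟨0, hA0⟩
  have hAbdd : BddAbove A := ⟨t, fun s hs => hs.1⟩
  have hAclosed : IsClosed A := by
    have : A = {s | s ≤ t} ∩ g ⁻¹' (Iic (2 * D)) := rfl
    rw [this]
    exact (isClosed_le continuous_id continuous_const).inter (isClosed_Iic.preimage hg_cont)
  set a := sSup A with ha
  have haA : a ∈ A := hAclosed.csSup_mem hAne hAbdd
  have h0a : 0 ≤ a := le_csSup hAbdd hA0
  have hat : a < t := lt_of_le_of_ne haA.1 (by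
    intro h
    have := haA.2
    rw [h] at this
    exact absurd this (not_le.mpr hgt))
  have hga_le : g a ≤ 2 * D := haA.2
  have hnotA : ∀ s, a < s → s ≤ t → 2 * D < g s := by
    intro s has hst
    by_contra h
    push_neg at h
    exact absurd (le_csSup hAbdd (⟨hst, h⟩ : s ∈ A)) (not_le.mpr has)
  have hga_ge : 2 * D ≤ g a := by
    have htend : Filter.Tendsto g (nhdsWithin a (Ioi a)) (nhds (g a)) :=
      (hg_cont.continuousAt).tendsto.mono_left nhdsWithin_le_nhds
    refine ge_of_tendsto htend ?_
    have h1 : ∀ᶠ s in nhdsWithin a (Ioi a), s < t :=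
      Filter.Eventually.filter_mono nhdsWithin_le_nhds (gt_mem_nhds hat)
    filter_upwards [h1, self_mem_nhdsWithin] with s hs1 hs2
    exact (hnotA s hs2 hs1.le).le
  set B : Set ℝ := {s | t ≤ s ∧ g s ≤ 2 * D} with hB
  have hBL : L ∈ B := ⟨ht.2, by rw [hgL]; positivity⟩
  have hBne : B.Nonempty := ⟨L, hBL⟩
  have hBbdd : BddBelow B := ⟨t, fun s hs => hs.1⟩
  have hBclosed : IsClosed B := by
    have : B = {s | t ≤ s} ∩ g ⁻¹' (Iic (2 * D)) := rfl
    rw [this]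
    exact (isClosed_le continuous_const continuous_id).inter (isClosed_Iic.preimage hg_cont)
  set b := sInf B with hb
  have hbB : b ∈ B := hBclosed.csInf_mem hBne hBbdd
  have hbL : b ≤ L := csInf_le hBbdd hBL
  have htb : t < b := lt_of_le_of_ne hbB.1 (by
    intro h
    have := hbB.2
    rw [← h] at this
    exact absurd this (not_le.mpr hgt))
  have hgb_le : g b ≤ 2 * D := hbB.2
  have hnotB : ∀ s, t ≤ s → s < b → 2 * D < g s := by
    intro s hts hsb
    by_contra h
    push_neg at h
    exact absurd (csInf_le hBbdd (⟨hts, h⟩ : s ∈ B)) (not_le.mpr hsb)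
  have hgb_ge : 2 * D ≤ g b := by
    have htend : Filter.Tendsto g (nhdsWithin b (Iio b)) (nhds (g b)) :=
      (hg_cont.continuousAt).tendsto.mono_left nhdsWithin_le_nhds
    refine ge_of_tendsto htend ?_
    have h1 : ∀ᶠ s in nhdsWithin b (Iio b), t < s :=
      Filter.Eventually.filter_mono nhdsWithin_le_nhds (lt_mem_nhds htb)
    filter_upwards [h1, self_mem_nhdsWithin] with s hs1 hs2
    exact (hnotB s hs1.le hs2).le
  have hab : a ≤ b := le_trans haA.1 hbB.1
  have hbL' : b ∈ Icc 0 L := ⟨le_trans h0a hab, hbL⟩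
  have haL : a ∈ Icc 0 L := ⟨h0a, le_trans hab hbL⟩
  -- every point of [a,b] is at distance ≥ 2D from γ
  have hmid : ∀ s ∈ Icc a b, 2 * D ≤ g s := by
    intro s hs
    rcases le_or_gt s t with hst | hts
    · rcases eq_or_lt_of_le hs.1 with h | h
      · rw [← h]; exact hga_ge
      · exact (hnotA s h hst).le
    · rcases eq_or_lt_of_le hs.2 with h | h
      · rw [h]; exact hgb_ge
      · exact (hnotB s hts.le h).le
  -- subsegment κ' = f '' Icc a b is a geodesic from f a to f b
  have hsub_mem : ∀ s ∈ Icc a b, s ∈ Icc 0 L := fun s hs =>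
    ⟨le_trans h0a hs.1, le_trans hs.2 hbL⟩
  have hseg : IsGeodesicSeg (f '' Icc a b) (f a) (f b) := by
    refine ⟨fun s => f (a + s), b - a, by linarith, ?_, by norm_num, by ring_nf, ?_⟩
    · intro s hs u hu
      have hsm : a + s ∈ Icc 0 L := hsub_mem _ ⟨by linarith [hs.1], by linarith [hs.2]⟩
      have hum : a + u ∈ Icc 0 L := hsub_mem _ ⟨by linarith [hu.1], by linarith [hu.2]⟩
      rw [hiso _ hsm _ hum]
      ring_nf
    · rw [show Icc (0:ℝ) (b - a) = (fun s => -a + s) '' Icc a b by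
        rw [image_const_add_Icc]; congr 1 <;> ring]
      rw [← Set.image_comp]
      congr 1
      ext s
      simp
  have hκ'ne : (f '' Icc a b).Nonempty := ⟨f a, ⟨a, ⟨le_refl a, hab⟩, rfl⟩⟩
  have hfa_mem : f a ∈ f '' Icc a b := ⟨a, ⟨le_refl a, hab⟩, rfl⟩
  have hfb_mem : f b ∈ f '' Icc a b := ⟨b, ⟨hab, le_refl b⟩, rfl⟩
  -- setDist γ κ' ≥ 2D
  have hsetd : 2 * D ≤ setDist γ (f '' Icc a b) := by
    rw [setDist]
    refine le_csInf ⟨dist x (f a), mem_image2_of_mem hxγ hfa_mem⟩ ?_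
    rintro d ⟨p, hp, q, hq, rfl⟩
    obtain ⟨s, hs, rfl⟩ := hq
    have h1 : infDist (f s) γ ≤ dist (f s) p := infDist_le_dist_of_mem hp
    have h2 : g s = infDist (f s) γ := by rw [hg]; simp only [hc_id s (hsub_mem s hs)]
    have := hmid s hs
    rw [h2] at this
    rw [dist_comm]
    linarith
  have hdiam : diam (projSet γ (f '' Icc a b)) < D := by
    refine hall γ ⟨x, y, hγ⟩ (f '' Icc a b) ⟨f a, f b, hseg⟩ ?_
    linarith
  -- projections of endpoints
  obtain ⟨p, hpγ, hpd⟩ := hγcomp.exists_infDist_eq_dist hγne (f a)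
  obtain ⟨q, hqγ, hqd⟩ := hγcomp.exists_infDist_eq_dist hγne (f b)
  have hp_mem : p ∈ projSet γ (f '' Icc a b) := by
    rw [projSet]
    exact mem_biUnion hfa_mem ⟨hpγ, hpd.symm⟩
  have hq_mem : q ∈ projSet γ (f '' Icc a b) := by
    rw [projSet]
    exact mem_biUnion hfb_mem ⟨hqγ, hqd.symm⟩
  have hproj_sub : projSet γ (f '' Icc a b) ⊆ γ := by
    rw [projSet]
    exact iUnion₂_subset fun w hw p hp => hp.1
  have hbdd : Bornology.IsBounded (projSet γ (f '' Icc a b)) :=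
    hγcomp.isBounded.subset hproj_sub
  have hpq : dist p q ≤ diam (projSet γ (f '' Icc a b)) := dist_le_diam_of_mem hbdd hp_mem hq_mem
  -- distances of endpoints to their projections
  have hga_eq : g a = infDist (f a) γ := by rw [hg]; simp only [hc_id a haL]
  have hgb_eq : g b = infDist (f b) γ := by rw [hg]; simp only [hc_id b hbL']
  have hda : dist (f a) p ≤ 2 * D := by rw [← hpd, ← hga_eq]; exact hga_le
  have hdb : dist (f b) q ≤ 2 * D := by rw [← hqd, ← hgb_eq]; exact hgb_le
  have hlen : b - a = dist (f a) (f b) := by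
    rw [hiso a haL b hbL', abs_of_nonpos (by linarith)]; ring
  have htri : dist (f a) (f b) ≤ dist (f a) p + dist p q + dist q (f b) := by
    calc dist (f a) (f b) ≤ dist (f a) p + dist p (f b) := dist_triangle _ _ _
    _ ≤ dist (f a) p + (dist p q + dist q (f b)) := by linarith [dist_triangle p q (f b)]
    _ = _ := by ring
  have hqb : dist q (f b) = dist (f b) q := dist_comm _ _
  have hlen5 : b - a ≤ 5 * D := by
    rw [hlen]
    rw [hqb] at htri
    linarith
  -- conclude
  have hta : dist (f t) (f a) = t - a := by
    rw [hiso t ht a haL, abs_of_nonneg (by linarith)]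
  have := infDist_le_infDist_add_dist (x := f t) (y := f a) (s := γ)
  rw [hta, ← hga_eq] at this
  have htb' : t - a ≤ b - a := by linarith
  linarith
/-- if every geodesic in a geodesic space is `D`-contracting, then
geodesic bigons are `10D`-thin. -/
theorem stmt3 {X : Type*} [MetricSpace X] [ProperSpace X]
    (hX : GeodesicSpace X) (D : ℝ) (hD : 0 < D)
    (hall : ∀ γ : Set X, IsGeodesic γ → IsContractingSet D γ)
    (x y : X) (γ κ : Set X)
    (hγ : IsGeodesicSeg γ x y) (hκ : IsGeodesicSeg κ x y) :
    (dist x y < D → diam (γ ∪ κ) < 2 * D) ∧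
    (D ≤ dist x y → hausdorffDist γ κ ≤ 10 * D) ∧
    (∀ z ∈ γ, infDist z κ ≤ 10 * D) ∧
    (∀ z ∈ κ, infDist z γ ≤ 10 * D) := by
  have hκγ : ∀ z ∈ κ, infDist z γ ≤ 10 * D := fun z hz => by
    linarith [key D hD hall x y γ κ hγ hκ z hz]
  have hγκ : ∀ z ∈ γ, infDist z κ ≤ 10 * D := fun z hz => by
    linarith [key D hD hall x y κ γ hκ hγ z hz]
  refine ⟨?_, ?_, hγκ, hκγ⟩
  · intro hxy
    have hbound : ∀ z ∈ γ ∪ κ, ∀ w ∈ γ ∪ κ, dist z w ≤ 2 * dist x y := by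
      intro z hz w hw
      have hz' : dist z x ≤ dist x y := by
        rcases hz with h | h
        · exact geod_dist_bound hγ z h
        · exact geod_dist_bound hκ z h
      have hw' : dist w x ≤ dist x y := by
        rcases hw with h | h
        · exact geod_dist_bound hγ w h
        · exact geod_dist_bound hκ w h
      calc dist z w ≤ dist z x + dist x w := dist_triangle _ _ _
      _ = dist z x + dist w x := by rw [dist_comm x w]
      _ ≤ 2 * dist x y := by linarith
    have h1 : diam (γ ∪ κ) ≤ 2 * dist x y :=
      diam_le_of_forall_dist_le (by positivity) hbound
    linarith
  · intro _
    exact hausdorffDist_le_of_infDist (by positivity) hγκ hκγ
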